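/- Let A be a noetherian ring complete with respect to an ideal I, S a profinite set, and M a finitely generated A-module. Then the natural map C(S,A) ⊗_A M → C(S,M) is an isomorphism. -/

import Mathlib

open TensorProduct

section Helpers
variable {A : Type*} [CommRing A]

lemma pi_mem_smul_top_iff {k : ℕ} (J : Ideal A) (x : Fin k → A) :
    x ∈ (J • ⊤ : Submodule A (Fin k → A)) ↔ ∀ i, x i ∈ J := by
  constructor
  · intro hx i
    have h1 : (LinearMap.proj i : (Fin k → A) →ₗ[A] A) x ∈
        Submodule.map (LinearMap.proj i) (J • ⊤ : Submodule A (Fin k → A)) :=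
      Submodule.mem_map_of_mem hx
    rw [Submodule.map_smul''] at h1
    have h2 : Submodule.map (LinearMap.proj i : (Fin k → A) →ₗ[A] A) ⊤ = ⊤ := by
      rw [Submodule.map_top, LinearMap.range_eq_top]
      exact fun a => ⟨(fun _ => a), rfl⟩
    rw [h2] at h1
    simpa [smul_eq_mul, Ideal.mul_top] using h1
  · intro hx
    have hx2 : x = ∑ i, x i • (Pi.single i (1 : A) : Fin k → A) := by
      funext j
      simp [Fintype.sum_apply, Pi.single_apply, mul_ite]
    rw [hx2]
    exact Submodule.sum_mem _ fun i _ =>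
      Submodule.smul_mem_smul (hx i) trivial

lemma smul_top_self (J : Ideal A) : (J • ⊤ : Submodule A A) = J := by
  rw [smul_eq_mul, Ideal.mul_top]

end Helpers


lemma haus_of_finite {A M : Type u} [CommRing A] [IsNoetherianRing A] (I : Ideal A)
    [IsAdicComplete I A] [AddCommGroup M] [Module A M] [Module.Finite A M] :
    ∀ x : M, (∀ n, x ∈ (I ^ n • ⊤ : Submodule A M)) → x = 0 := by
  intro x hx
  have hx' : x ∈ (⨅ i : ℕ, I ^ i • ⊤ : Submodule A M) := Submodule.mem_iInf _ |>.mpr hx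
  rcases (Ideal.mem_iInf_smul_pow_eq_bot_iff (I := I) x).mp hx' with ⟨t, ht⟩
  have hjac : (t : A) ∈ Ideal.jacobson ⊥ := IsAdicComplete.le_jacobson_bot I t.2
  have hun : IsUnit (1 - (t : A)) := by
    have h := (Ideal.mem_jacobson_bot.mp hjac) (-1)
    rw [mul_neg_one] at h
    rwa [sub_eq_neg_add]
  rcases hun with ⟨v, hv⟩
  have h0 : (1 - (t : A)) • x = 0 := by
    rw [sub_smul, one_smul, ht, sub_self]
  calc x = ((↑v⁻¹ : A) * (1 - (t : A))) • x := by
            rw [← hv, Units.inv_mul, one_smul]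
    _ = (↑v⁻¹ : A) • ((1 - (t : A)) • x) := by rw [mul_smul]
    _ = 0 := by rw [h0, smul_zero]

lemma haus_of_surjective {A : Type u} [CommRing A] [IsNoetherianRing A] (I : Ideal A)
    [IsAdicComplete I A] {M : Type*} [AddCommGroup M] [Module A M]
    {k : ℕ} (π : (Fin k → A) →ₗ[A] M) (hsurj : Function.Surjective π) :
    ∀ x : M, (∀ n, x ∈ (I ^ n • ⊤ : Submodule A M)) → x = 0 := by
  intro x hx
  let e := π.quotKerEquivOfSurjective hsurj
  have hy : ∀ n, e.symm x ∈ (I ^ n • ⊤ : Submodule A ((Fin k → A) ⧸ LinearMap.ker π)) := by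
    intro n
    have h1 : x ∈ Submodule.map (e : ((Fin k → A) ⧸ LinearMap.ker π) →ₗ[A] M)
        (I ^ n • ⊤ : Submodule A ((Fin k → A) ⧸ LinearMap.ker π)) := by
      rw [Submodule.map_smul'', Submodule.map_top, LinearEquiv.range]
      exact hx n
    rcases h1 with ⟨y, hy1, hy2⟩
    have : y = e.symm x := by
      apply e.injective
      rw [LinearEquiv.apply_symm_apply]
      exact hy2
    rwa [← this]
  have := haus_of_finite I (e.symm x) hy
  have h2 : x = e (e.symm x) := by simp
  rw [h2, this, map_zero]

/-- Key lemma: continuous lifting along a linear map out of a finite free module. -/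
theorem key_lift
    {A : Type*} [CommRing A] [IsNoetherianRing A] [TopologicalSpace A] [IsTopologicalRing A]
    {I : Ideal A} (hA : IsAdic I) [IsAdicComplete I A]
    {S : Type*} [TopologicalSpace S]
    {M : Type*} [AddCommGroup M] [Module A M]
    [TopologicalSpace M] [IsTopologicalAddGroup M] [ContinuousSMul A M]
    (hH : ∀ x : M, (∀ n, x ∈ (I ^ n • ⊤ : Submodule A M)) → x = 0)
    (hM : ∀ t : Set M, t ∈ nhds (0 : M) ↔ ∃ n : ℕ, ((I ^ n • ⊤ : Submodule A M) : Set M) ⊆ t)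
    {r : ℕ} (π : (Fin r → A) →ₗ[A] M) (c : ℕ)
    (hAR : ∀ n : ℕ, LinearMap.range π ⊓ (I ^ (n + c) • ⊤ : Submodule A M)
      ≤ I ^ n • LinearMap.range π)
    (f : C(S, M)) (hf : ∀ s, f s ∈ LinearMap.range π) :
    ∃ g : C(S, Fin r → A), ∀ s, π (g s) = f s := by
  classical
  rw [isAdic_iff] at hA
  set N := LinearMap.range π with hN
  -- openness of `I^n • ⊤` in `M`
  have hopenM : ∀ n : ℕ, IsOpen ((I ^ n • ⊤ : Submodule A M) : Set M) := by
    intro n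
    exact AddSubgroup.isOpen_of_mem_nhds (I ^ n • ⊤ : Submodule A M).toAddSubgroup
      ((hM _).mpr ⟨n, subset_rfl⟩)
  have hπcont : Continuous π := LinearMap.continuous_on_pi π
  -- the invariant
  set P : ℕ → C(S, Fin r → A) → Prop :=
    fun n u => ∀ s, f s - π (u s) ∈ N ⊓ (I ^ n • ⊤ : Submodule A M) with hP
  -- the inductive step
  have step : ∀ (n : ℕ) (u : C(S, Fin r → A)), P n u →
      ∃ w : C(S, Fin r → A), P (n + 1) w ∧
        ∀ s, w s - u s ∈ (I ^ (n - c) • ⊤ : Submodule A (Fin r → A)) := by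
    intro n u hu
    set d : S → M := fun s => f s - π (u s) with hd
    have hdcont : Continuous d := f.continuous.sub (hπcont.comp u.continuous)
    have hdmem : ∀ s, d s ∈ I ^ (n - c) • N := by
      intro s
      rcases le_or_gt c n with hcn | hnc
      · have := hAR (n - c)
        rw [Nat.sub_add_cancel hcn] at this
        exact this ⟨(hu s).1, (hu s).2⟩
      · rw [Nat.sub_eq_zero_of_le hnc.le, pow_zero, Ideal.one_eq_top, Submodule.top_smul]
        exact (hu s).1
    have hdlift : ∀ s, ∃ a : Fin r → A,
        a ∈ (I ^ (n - c) • ⊤ : Submodule A (Fin r → A)) ∧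
        Submodule.Quotient.mk (p := (I ^ (n + 1) • ⊤ : Submodule A M)) (π a)
          = Submodule.Quotient.mk (d s) := by
      intro s
      have : d s ∈ Submodule.map π (I ^ (n - c) • ⊤ : Submodule A (Fin r → A)) := by
        rw [Submodule.map_smul'', Submodule.map_top]
        exact hdmem s
      rcases this with ⟨a, ha, haeq⟩
      exact ⟨a, ha, by rw [haeq]⟩
    set Q := M ⧸ (I ^ (n + 1) • ⊤ : Submodule A M) with hQ
    set h : Q → (Fin r → A) := fun q =>
      if hq : ∃ a : Fin r → A, a ∈ (I ^ (n - c) • ⊤ : Submodule A (Fin r → A)) ∧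
          Submodule.Quotient.mk (p := (I ^ (n + 1) • ⊤ : Submodule A M)) (π a) = q
      then hq.choose else 0 with hh
    set v : S → (Fin r → A) := fun s => h (Submodule.Quotient.mk (d s)) with hv
    have hvspec : ∀ s, v s ∈ (I ^ (n - c) • ⊤ : Submodule A (Fin r → A)) ∧
        Submodule.Quotient.mk (p := (I ^ (n + 1) • ⊤ : Submodule A M)) (π (v s))
          = Submodule.Quotient.mk (d s) := by
      intro s
      have hex := hdlift s
      have : v s = hex.choose := dif_pos hex
      rw [this]
      exact hex.choose_spec
    -- local constancy of `v`
    have hlc : IsLocallyConstant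
        (fun s => (Submodule.Quotient.mk (d s) : Q)) := by
      rw [IsLocallyConstant.iff_isOpen_fiber]
      intro q
      rcases Submodule.Quotient.mk_surjective _ q with ⟨m₀, rfl⟩
      have : (fun s => (Submodule.Quotient.mk (d s) : Q)) ⁻¹' {Submodule.Quotient.mk m₀}
          = (fun s => d s - m₀) ⁻¹' ((I ^ (n + 1) • ⊤ : Submodule A M) : Set M) := by
        ext s
        simp only [Set.mem_preimage, Set.mem_singleton_iff, SetLike.mem_coe]
        exact Submodule.Quotient.eq _
      rw [this]
      exact (hopenM (n + 1)).preimage (hdcont.sub continuous_const)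
    have hvcont : Continuous v := (hlc.comp h).continuous
    refine ⟨⟨fun s => u s + v s, u.continuous.add hvcont⟩, ?_, ?_⟩
    · intro s
      simp only [ContinuousMap.coe_mk, map_add]
      constructor
      · have h1 : f s - π (u s) ∈ N := (hu s).1
        have h2 : π (v s) ∈ N := LinearMap.mem_range_self π (v s)
        have heq : f s - (π (u s) + π (v s)) = (f s - π (u s)) - π (v s) := by abel
        rw [heq]
        exact Submodule.sub_mem _ h1 h2
      · have := (Submodule.Quotient.eq _).mp (hvspec s).2
        have h3 : π (v s) - d s = π (v s) - (f s - π (u s)) := rfl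
        rw [h3] at this
        have h2 : f s - (π (u s) + π (v s)) = -(π (v s) - (f s - π (u s))) := by abel
        rw [h2]
        exact Submodule.neg_mem _ this
    · intro s
      simp only [ContinuousMap.coe_mk, add_sub_cancel_left]
      exact (hvspec s).1
  -- build the sequence
  have base : P 0 (0 : C(S, Fin r → A)) := by
    intro s
    refine ⟨by simpa using hf s, ?_⟩
    simp
  choose w hw1 hw2 using step
  let u : ∀ n : ℕ, {x : C(S, Fin r → A) // P n x} := fun n =>
    Nat.rec (motive := fun n => {x : C(S, Fin r → A) // P n x}) ⟨0, base⟩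
      (fun n p => ⟨w n p.1 p.2, hw1 n p.1 p.2⟩) n
  have huP : ∀ n, P n (u n).1 := fun n => (u n).2
  have hustep : ∀ n s, ((u (n+1)).1 : C(S, Fin r → A)) s - (u n).1 s ∈
      (I ^ (n - c) • ⊤ : Submodule A (Fin r → A)) := fun n s => hw2 n (u n).1 (u n).2 s
  -- telescoping estimate
  have tele : ∀ m n, m ≤ n → ∀ s, ((u n).1 : C(S, Fin r → A)) s - (u m).1 s ∈
      (I ^ (m - c) • ⊤ : Submodule A (Fin r → A)) := by
    intro m n hmn
    induction n, hmn using Nat.le_induction with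
    | base => intro s; simpa using Submodule.zero_mem _
    | succ n hmn ih =>
      intro s
      have h1 := hustep n s
      have h2 := ih s
      have h3 : ((u (n+1)).1 : C(S, Fin r → A)) s - (u m).1 s
          = (((u (n+1)).1 : C(S, Fin r → A)) s - (u n).1 s) + ((u n).1 s - (u m).1 s) := by
        abel
      rw [h3]
      refine Submodule.add_mem _ ?_ h2
      exact Submodule.smul_mono_left (Ideal.pow_le_pow_right (Nat.sub_le_sub_right hmn c)) h1
  -- existence of the limit
  have hlim : ∀ (s : S) (i : Fin r), ∃ L : A, ∀ n,
      ((u (n + c)).1 : C(S, Fin r → A)) s i ≡ L [SMOD (I ^ n • ⊤ : Submodule A A)] := by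
    intro s i
    apply IsPrecomplete.prec (IsAdicComplete.toIsPrecomplete (I := I) (M := A))
    intro m n hmn
    rw [SModEq.sub_mem, smul_top_self]
    have := tele (m + c) (n + c) (by omega) s
    rw [Nat.add_sub_cancel] at this
    have hmem := (pi_mem_smul_top_iff _ _).mp this i
    have heq : ((u (m+c)).1 : C(S, Fin r → A)) s i - (u (n+c)).1 s i
        = -((((u (n+c)).1 : C(S, Fin r → A)) s - (u (m+c)).1 s) i) := by
      simp [Pi.sub_apply]
    rw [heq]
    exact neg_mem hmem
  choose g hg using hlim
  -- `g` approximates `u (n+c)`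
  have hgu : ∀ n s, g s - ((u (n + c)).1 : C(S, Fin r → A)) s ∈
      (I ^ n • ⊤ : Submodule A (Fin r → A)) := by
    intro n s
    rw [pi_mem_smul_top_iff]
    intro i
    have := (hg s i n)
    rw [SModEq.sub_mem, smul_top_self] at this
    simpa [Pi.sub_apply] using neg_mem this
  -- the limit satisfies π g = f
  have hπg : ∀ s, π (g s) = f s := by
    intro s
    have key : ∀ n, π (g s) - f s ∈ (I ^ n • ⊤ : Submodule A M) := by
      intro n
      have h1 : π (g s) - π (((u (n+c)).1 : C(S, Fin r → A)) s)
          ∈ (I ^ n • ⊤ : Submodule A M) := by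
        have : π (g s - ((u (n+c)).1 : C(S, Fin r → A)) s) ∈
            Submodule.map π (I ^ n • ⊤ : Submodule A (Fin r → A)) :=
          Submodule.mem_map_of_mem (hgu n s)
        rw [Submodule.map_smul''] at this
        rw [← map_sub]
        exact SetLike.le_def.mp (smul_mono_right _ le_top) this
      have h2 : π (((u (n+c)).1 : C(S, Fin r → A)) s) - f s
          ∈ (I ^ n • ⊤ : Submodule A M) := by
        have := (huP (n+c) s).2
        have h3 : π (((u (n+c)).1 : C(S, Fin r → A)) s) - f s
            = -(f s - π ((u (n+c)).1 s)) := by abel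
        rw [h3]
        exact Submodule.neg_mem _ (Submodule.smul_mono_left
          (Ideal.pow_le_pow_right (Nat.le_add_right n c)) this)
      have h4 : π (g s) - f s = (π (g s) - π (((u (n+c)).1 : C(S, Fin r → A)) s))
          + (π (((u (n+c)).1 : C(S, Fin r → A)) s) - f s) := by abel
      rw [h4]
      exact Submodule.add_mem _ h1 h2
    have := hH _ key
    rwa [sub_eq_zero] at this
  -- continuity of g
  have hgcont : Continuous g := by
    rw [continuous_iff_continuousAt]
    intro s₀
    intro U hU
    rw [Filter.mem_map]
    rw [nhds_pi] at hU
    rcases Filter.mem_pi.mp hU with ⟨Iset, hIfin, t, ht, hsub⟩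
    have hni : ∀ i : Fin r, ∃ n : ℕ, ∀ a ∈ (I ^ n : Ideal A), g s₀ i + a ∈ t i := by
      intro i
      have h1 : (fun a : A => g s₀ i + a) ⁻¹' t i ∈ nhds (0 : A) := by
        apply (continuous_const.add continuous_id).continuousAt.preimage_mem_nhds
        simpa using ht i
      rcases hA.2 _ h1 with ⟨n, hn⟩
      exact ⟨n, fun a ha => hn ha⟩
    choose ni hni using hni
    set n : ℕ := Finset.univ.sup ni with hn
    set uc : C(S, Fin r → A) := (u (n + c)).1 with huc
    set V : Set S := uc ⁻¹' {x | ∀ i, x i - uc s₀ i ∈ (I ^ n : Ideal A)} with hV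
    have hVnhds : V ∈ nhds s₀ := by
      apply uc.continuous.continuousAt.preimage_mem_nhds
      have hopen : IsOpen {x : Fin r → A | ∀ i, x i - uc s₀ i ∈ (I ^ n : Ideal A)} := by
        have : {x : Fin r → A | ∀ i, x i - uc s₀ i ∈ (I ^ n : Ideal A)}
            = Set.pi Set.univ (fun i => (fun a => a - uc s₀ i) ⁻¹' (I ^ n : Ideal A)) := by
          ext x; simp [Set.mem_pi]
        rw [this]
        exact isOpen_set_pi Set.finite_univ
          (fun i _ => (hA.1 n).preimage (continuous_id.sub continuous_const))
      exact hopen.mem_nhds (by simp)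
    refine Filter.mem_of_superset hVnhds ?_
    intro s hs
    apply hsub
    intro i _
    have e1 : g s i - uc s i ∈ (I ^ n : Ideal A) :=
      (pi_mem_smul_top_iff _ _).mp (hgu n s) i
    have e2 : uc s i - uc s₀ i ∈ (I ^ n : Ideal A) := hs i
    have e3 : uc s₀ i - g s₀ i ∈ (I ^ n : Ideal A) := by
      have := (pi_mem_smul_top_iff _ _).mp (hgu n s₀) i
      simpa using neg_mem this
    have e4 : g s i = g s₀ i + ((g s i - uc s i) + (uc s i - uc s₀ i) + (uc s₀ i - g s₀ i)) := by
      abel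
    rw [e4]
    apply hni i
    exact Ideal.pow_le_pow_right (Finset.le_sup (Finset.mem_univ i))
      (add_mem (add_mem e1 e2) e3)
  exact ⟨⟨g, hgcont⟩, hπg⟩

lemma pi_nhds_basis {A : Type*} [CommRing A] [TopologicalSpace A] [IsTopologicalRing A]
    {I : Ideal A} (hA : IsAdic I) (k : ℕ) :
    ∀ t : Set (Fin k → A), t ∈ nhds (0 : Fin k → A) ↔
      ∃ n : ℕ, ((I ^ n • ⊤ : Submodule A (Fin k → A)) : Set (Fin k → A)) ⊆ t := by
  rw [isAdic_iff] at hA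
  intro t
  constructor
  · intro ht
    rw [nhds_pi] at ht
    rcases Filter.mem_pi.mp ht with ⟨Iset, hIfin, ts, hts, hsub⟩
    have hex : ∀ i, ∃ n, ((I ^ n : Ideal A) : Set A) ⊆ ts i := fun i => hA.2 _ (hts i)
    choose ni hni using hex
    refine ⟨Finset.univ.sup ni, ?_⟩
    intro x hx
    apply hsub
    intro i _
    apply hni i
    exact Ideal.pow_le_pow_right (Finset.le_sup (Finset.mem_univ i))
      ((pi_mem_smul_top_iff _ _).mp hx i)
  · rintro ⟨n, hn⟩
    apply Filter.mem_of_superset _ hn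
    have hsup : Set.pi Set.univ (fun _ : Fin k => ((I ^ n : Ideal A) : Set A))
        ⊆ ((I ^ n • ⊤ : Submodule A (Fin k → A)) : Set (Fin k → A)) := by
      intro x hx
      exact (pi_mem_smul_top_iff _ _).mpr fun i => hx i (Set.mem_univ i)
    apply Filter.mem_of_superset _ hsup
    apply set_pi_mem_nhds Set.finite_univ
    intro i _
    exact (hA.1 n).mem_nhds (by simpa using Submodule.zero_mem (I ^ n))

/-- The natural `A`-linear map `C(S,A) ⊗_A M → C(S,M)`, `f ⊗ m ↦ (s ↦ f(s) • m)`. -/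
noncomputable def cTensorMap (S : Type*) [TopologicalSpace S]
    (A : Type*) [CommRing A] [TopologicalSpace A] [IsTopologicalRing A]
    (M : Type*) [AddCommGroup M] [Module A M] [TopologicalSpace M]
    [IsTopologicalAddGroup M] [ContinuousSMul A M] :
    TensorProduct A C(S, A) M →ₗ[A] C(S, M) :=
  TensorProduct.lift (LinearMap.mk₂ A
    (fun f m => ⟨fun s => f s • m, (map_continuous f).smul continuous_const⟩)
    (by intro f g m; ext s; simp [add_smul])
    (by intro c f m; ext s; simp [mul_smul])
    (by intro f m n; ext s; simp [smul_add])
    (by intro c f m; ext s; simp [smul_comm c]))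

theorem cTensorMap_bijective
    (A : Type*) [CommRing A] [IsNoetherianRing A] [TopologicalSpace A] [IsTopologicalRing A]
    (I : Ideal A) (hA : IsAdic I) [IsAdicComplete I A]
    (S : Type*) [TopologicalSpace S] [CompactSpace S] [T2Space S] [TotallyDisconnectedSpace S]
    (M : Type*) [AddCommGroup M] [Module A M] [Module.Finite A M]
    [TopologicalSpace M] [IsTopologicalAddGroup M] [ContinuousSMul A M]
    (hM : ∀ t : Set M, t ∈ nhds (0 : M) ↔ ∃ n : ℕ, ((I ^ n • ⊤ : Submodule A M) : Set M) ⊆ t) :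
    Function.Bijective (cTensorMap S A M) := by
  classical
  obtain ⟨k, π, hsurjπ⟩ := Module.Finite.exists_fin' A M
  set mgen : Fin k → M := fun i => π fun j => if i = j then 1 else 0 with hmgen
  -- evaluation of `cTensorMap` on sums of pure tensors
  have heval : ∀ (F : Fin k → C(S, A)) (mm : Fin k → M) (s : S),
      cTensorMap S A M (∑ i, F i ⊗ₜ[A] mm i) s = ∑ i, F i s • mm i := by
    intro F mm s
    rw [map_sum]
    simp [cTensorMap]
  constructor
  · -- injectivity
    rw [injective_iff_map_eq_zero]
    intro x hx0
    -- represent x as a sum of pure tensors along the generators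
    have hrep : ∀ y : TensorProduct A C(S, A) M, ∃ F : Fin k → C(S, A),
        y = ∑ i, F i ⊗ₜ[A] mgen i := by
      intro y
      induction y using TensorProduct.induction_on with
      | zero => exact ⟨0, by simp⟩
      | tmul f m =>
        obtain ⟨a, rfl⟩ := hsurjπ m
        refine ⟨fun i => a i • f, ?_⟩
        calc f ⊗ₜ[A] π a = f ⊗ₜ[A] (∑ i, a i • mgen i) := by
              rw [← LinearMap.pi_apply_eq_sum_univ π a]
          _ = ∑ i, f ⊗ₜ[A] (a i • mgen i) := TensorProduct.tmul_sum f _ _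
          _ = ∑ i, (a i • f) ⊗ₜ[A] mgen i := by
              refine Finset.sum_congr rfl fun i _ => ?_
              rw [TensorProduct.smul_tmul]
      | add y z hy hz =>
        obtain ⟨F, hF⟩ := hy
        obtain ⟨G, hG⟩ := hz
        refine ⟨F + G, ?_⟩
        rw [hF, hG, ← Finset.sum_add_distrib]
        refine Finset.sum_congr rfl fun i _ => ?_
        simp [TensorProduct.add_tmul]
    obtain ⟨F, rfl⟩ := hrep x
    set G : C(S, Fin k → A) := ⟨fun s i => F i s, continuous_pi fun i => (F i).continuous⟩
      with hGdef
    have hGK : ∀ s, π (G s) = 0 := by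
      intro s
      have h0 : cTensorMap S A M (∑ i, F i ⊗ₜ[A] mgen i) s = 0 := by rw [hx0]; rfl
      rw [heval] at h0
      rw [LinearMap.pi_apply_eq_sum_univ π (G s)]
      exact h0
    -- generators of the kernel
    obtain ⟨r, π'', hsurjπ''⟩ := Module.Finite.exists_fin' A (LinearMap.ker π)
    set π' : (Fin r → A) →ₗ[A] (Fin k → A) := (LinearMap.ker π).subtype ∘ₗ π'' with hπ'
    set κ : Fin r → (Fin k → A) := fun j => π' fun j' => if j = j' then 1 else 0 with hκ
    have hrange : LinearMap.range π' = LinearMap.ker π := by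
      rw [hπ', LinearMap.range_comp, LinearMap.range_eq_top.mpr hsurjπ'',
        Submodule.map_top, Submodule.range_subtype]
    have hκker : ∀ j, κ j ∈ LinearMap.ker π := by
      intro j
      rw [← hrange]
      exact ⟨_, rfl⟩
    -- Artin-Rees
    obtain ⟨cAR, hcAR⟩ := Ideal.exists_pow_inf_eq_pow_smul I (LinearMap.ker π)
    have hAR : ∀ n : ℕ, LinearMap.range π' ⊓ (I ^ (n + cAR) • ⊤ : Submodule A (Fin k → A))
        ≤ I ^ n • LinearMap.range π' := by
      intro n
      rw [hrange]
      intro x hx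
      have h1 : x ∈ (I ^ (n + cAR) • ⊤ : Submodule A (Fin k → A)) ⊓ LinearMap.ker π :=
        ⟨hx.2, hx.1⟩
      rw [hcAR (n + cAR) (Nat.le_add_left _ _)] at h1
      rw [Nat.add_sub_cancel] at h1
      exact SetLike.le_def.mp (smul_mono_right _ inf_le_right) h1
    -- lift G along π'
    obtain ⟨g, hg⟩ := key_lift hA (haus_of_finite I) (pi_nhds_basis hA k) π' cAR hAR G
      (fun s => by rw [hrange]; exact LinearMap.mem_ker.mpr (hGK s))
    set H : Fin r → C(S, A) :=
      fun j => ⟨fun s => g s j, (continuous_apply j).comp g.continuous⟩ with hH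
    have hFeq : ∀ i, F i = ∑ j, κ j i • H j := by
      intro i
      ext s
      have h1 : G s i = ∑ j, g s j * κ j i := by
        rw [← hg s, LinearMap.pi_apply_eq_sum_univ π' (g s)]
        simp only [Finset.sum_apply, Pi.smul_apply, smul_eq_mul]
        rfl
      calc F i s = G s i := rfl
        _ = ∑ j, g s j * κ j i := h1
        _ = (∑ j, κ j i • H j) s := by
            simp [ContinuousMap.coe_sum, Finset.sum_apply, hH, mul_comm]
    calc ∑ i, F i ⊗ₜ[A] mgen i
        = ∑ i, ∑ j, (κ j i • H j) ⊗ₜ[A] mgen i := by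
          refine Finset.sum_congr rfl fun i _ => ?_
          rw [hFeq i, TensorProduct.sum_tmul]
      _ = ∑ j, ∑ i, H j ⊗ₜ[A] (κ j i • mgen i) := by
          rw [Finset.sum_comm]
          exact Finset.sum_congr rfl fun j _ => Finset.sum_congr rfl fun i _ =>
            TensorProduct.smul_tmul _ _ _
      _ = ∑ j, H j ⊗ₜ[A] (∑ i, κ j i • mgen i) := by
          exact Finset.sum_congr rfl fun j _ => (TensorProduct.tmul_sum _ _ _).symm
      _ = ∑ j, H j ⊗ₜ[A] π (κ j) := by
          refine Finset.sum_congr rfl fun j _ => ?_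
          rw [← LinearMap.pi_apply_eq_sum_univ π (κ j)]
      _ = 0 := by
          refine Finset.sum_eq_zero fun j _ => ?_
          rw [LinearMap.mem_ker.mp (hκker j), TensorProduct.tmul_zero]
  · -- surjectivity
    intro f
    have hAR0 : ∀ n : ℕ, LinearMap.range π ⊓ (I ^ (n + 0) • ⊤ : Submodule A M)
        ≤ I ^ n • LinearMap.range π := by
      intro n
      rw [LinearMap.range_eq_top.mpr hsurjπ]
      rw [Nat.add_zero]
      exact fun x hx => SetLike.le_def.mp (smul_mono_right _ le_top) hx.2
    obtain ⟨g, hg⟩ := key_lift hA (haus_of_surjective I π hsurjπ) hM π 0 hAR0 f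
      (fun s => by rw [LinearMap.range_eq_top.mpr hsurjπ]; trivial)
    refine ⟨∑ i, (⟨fun s => g s i, (continuous_apply i).comp g.continuous⟩ : C(S, A))
      ⊗ₜ[A] mgen i, ?_⟩
    ext s
    rw [heval]
    have := LinearMap.pi_apply_eq_sum_univ π (g s)
    rw [hg s] at this
    exact this.symm
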